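/- arXiv:2403.12501 — 2 statements merged into one kernel-verified Lean document; each statement's English description precedes it below -/
import Mathlib

section
/- Suppose two bounded measurable maps G, G^I : U → ℝ^d satisfy sup_{u∈U} |G(u) − G^I(u)| ≤ ε. Then the corresponding Bayesian posteriors γ^y and γ^{I,y} (with densities proportional to exp(−(1/2)|y − G(u)|_Σ²) and exp(−(1/2)|y − G^I(u)|_Σ²) with respect to a common prior γ) satisfy d_Hell(γ^y, γ^{I,y}) ≤ C(y) ε for a constant C(y) depending only on y, Σ, and the uniform bound on G, G^I. -/
open MeasureTheory

/-- Lipschitz bound for sqrt away from zero (one-sided). -/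
private lemma sqrtLipAux {m x z : ℝ} (hm : 0 < m) (hx : m ≤ x) (hz : m ≤ z) :
    Real.sqrt x - Real.sqrt z ≤ |x - z| / (2 * Real.sqrt m) := by
  have hsm : 0 < Real.sqrt m := Real.sqrt_pos.mpr hm
  have hx0 : 0 ≤ x := le_trans hm.le hx
  have hz0 : 0 ≤ z := le_trans hm.le hz
  have hsx : Real.sqrt m ≤ Real.sqrt x := Real.sqrt_le_sqrt hx
  have hsz : Real.sqrt m ≤ Real.sqrt z := Real.sqrt_le_sqrt hz
  have hx2 : Real.sqrt x ^ 2 = x := Real.sq_sqrt hx0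
  have hz2 : Real.sqrt z ^ 2 = z := Real.sq_sqrt hz0
  rw [le_div_iff₀ (by positivity)]
  rcases le_total z x with h | h
  · have habs : |x - z| = x - z := abs_of_nonneg (by linarith)
    have hsxz : Real.sqrt z ≤ Real.sqrt x := Real.sqrt_le_sqrt h
    nlinarith [mul_nonneg (sub_nonneg.mpr hsxz) (sub_nonneg.mpr hsz)]
  · have hsxz : Real.sqrt x ≤ Real.sqrt z := Real.sqrt_le_sqrt h
    have : (Real.sqrt x - Real.sqrt z) * (2 * Real.sqrt m) ≤ 0 :=
      mul_nonpos_of_nonpos_of_nonneg (by linarith) (by positivity)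
    exact le_trans this (abs_nonneg _)

/-- Lipschitz bound for sqrt away from zero. -/
private lemma sqrtLip {m x z : ℝ} (hm : 0 < m) (hx : m ≤ x) (hz : m ≤ z) :
    |Real.sqrt x - Real.sqrt z| ≤ |x - z| / (2 * Real.sqrt m) := by
  rw [abs_sub_le_iff]
  refine ⟨sqrtLipAux hm hx hz, ?_⟩
  rw [abs_sub_comm]; exact sqrtLipAux hm hz hx

/-- `exp(-·)` is 1-Lipschitz on nonnegative reals. -/
private lemma expLip {s t : ℝ} (hs : 0 ≤ s) (ht : 0 ≤ t) :
    |Real.exp (-s) - Real.exp (-t)| ≤ |s - t| := by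
  have key : ∀ p q : ℝ, 0 ≤ p → 0 ≤ q → q ≤ p →
      Real.exp (-p) - Real.exp (-q) ≤ |p - q| := by
    intro p q hp hq hqp
    have h1 : Real.exp (-p) ≤ Real.exp (-q) := Real.exp_le_exp.mpr (by linarith)
    exact le_trans (by linarith) (abs_nonneg _)
  have key2 : ∀ p q : ℝ, 0 ≤ p → 0 ≤ q → q ≤ p →
      Real.exp (-q) - Real.exp (-p) ≤ |p - q| := by
    intro p q hp hq hqp
    have h1 : Real.exp (-q) ≤ 1 := Real.exp_le_one_iff.mpr (by linarith)
    have h2 : 1 - (p - q) ≤ Real.exp (-(p - q)) := by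
      have := Real.add_one_le_exp (-(p - q)); linarith
    have h3 : Real.exp (-p) = Real.exp (-q) * Real.exp (-(p - q)) := by
      rw [← Real.exp_add]; ring_nf
    have habs : |p - q| = p - q := abs_of_nonneg (by linarith)
    have h4 : Real.exp (-q) * (1 - (p - q)) ≤ Real.exp (-q) * Real.exp (-(p - q)) :=
      mul_le_mul_of_nonneg_left h2 (Real.exp_pos _).le
    nlinarith [Real.exp_pos (-q)]
  rcases le_total t s with h | h
  · rw [abs_sub_le_iff]; exact ⟨key s t hs ht h, key2 s t hs ht h⟩
  · rw [abs_sub_le_iff]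
    exact ⟨by rw [abs_sub_comm]; exact key2 t s ht hs h,
           by rw [abs_sub_comm]; exact key t s ht hs h⟩

set_option maxHeartbeats 2000000 in
/-- Hellinger continuity of the posterior with respect to perturbation of the forward map:
if two bounded measurable forward maps `G`, `GI` satisfy `sup_u ‖G u - GI u‖ ≤ ε`, then the
corresponding posteriors (with densities `exp(-Φ)/Z`, `exp(-Φ^I)/Z^I` w.r.t. the prior `γ`,
where `Φ(u) = (1/2)‖y - G u‖²`) satisfy `d_Hell(γ^y, γ^{I,y}) ≤ C ε`, with `C` depending
only on `y` and the uniform bound `M` (not on `G`, `GI`, `ε`). -/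
theorem posterior_hellinger_forward_perturbation
    {U : Type*} [MeasurableSpace U] (γ : Measure U) [IsProbabilityMeasure γ]
    {E : Type*} [NormedAddCommGroup E] [InnerProductSpace ℝ E] [MeasurableSpace E]
    [BorelSpace E]
    (M : ℝ) (hM : 0 < M) (y : E) :
    ∃ C : ℝ, 0 < C ∧ ∀ (G GI : U → E), Measurable G → Measurable GI →
      (∀ u, ‖G u‖ ≤ M) → (∀ u, ‖GI u‖ ≤ M) → ∀ ε : ℝ, 0 ≤ ε →
      (∀ u, ‖G u - GI u‖ ≤ ε) →
      Real.sqrt ((1 / 2) * ∫ u,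
          (Real.sqrt (Real.exp (-((1 / 2) * ‖y - G u‖ ^ 2)) /
              (∫ v, Real.exp (-((1 / 2) * ‖y - G v‖ ^ 2)) ∂γ)) -
           Real.sqrt (Real.exp (-((1 / 2) * ‖y - GI u‖ ^ 2)) /
              (∫ v, Real.exp (-((1 / 2) * ‖y - GI v‖ ^ 2)) ∂γ))) ^ 2 ∂γ)
        ≤ C * ε := by
  set L : ℝ := ‖y‖ + M with hLdef
  have hL0 : 0 < L := add_pos_of_nonneg_of_pos (norm_nonneg y) hM
  set m : ℝ := Real.exp (-((1 / 2) * L ^ 2)) with hmdef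
  have hm0 : 0 < m := Real.exp_pos _
  have hm1 : m ≤ 1 := Real.exp_le_one_iff.mpr (neg_nonpos.mpr (by positivity))
  set C : ℝ := (1 / (Real.sqrt m * m ^ 2)) * L with hCdef
  have hsm : 0 < Real.sqrt m := Real.sqrt_pos.mpr hm0
  have hC0 : 0 < C :=
    mul_pos (one_div_pos.mpr (mul_pos hsm (pow_pos hm0 2))) hL0
  refine ⟨C, hC0, ?_⟩
  intro G GI hG hGI hGb hGIb ε hε hdiff
  -- base facts about any bounded forward map
  have base : ∀ (F : U → E), Measurable F → (∀ u, ‖F u‖ ≤ M) →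
      (∀ u, m ≤ Real.exp (-((1 / 2) * ‖y - F u‖ ^ 2)) ∧
        Real.exp (-((1 / 2) * ‖y - F u‖ ^ 2)) ≤ 1) ∧
      Integrable (fun u => Real.exp (-((1 / 2) * ‖y - F u‖ ^ 2))) γ ∧
      m ≤ ∫ v, Real.exp (-((1 / 2) * ‖y - F v‖ ^ 2)) ∂γ ∧
      (∫ v, Real.exp (-((1 / 2) * ‖y - F v‖ ^ 2)) ∂γ) ≤ 1 := by
    intro F hF hFb
    have hpt : ∀ u, m ≤ Real.exp (-((1 / 2) * ‖y - F u‖ ^ 2)) ∧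
        Real.exp (-((1 / 2) * ‖y - F u‖ ^ 2)) ≤ 1 := by
      intro u
      have h1 : ‖y - F u‖ ≤ L := le_trans (norm_sub_le _ _) (by simp [hLdef]; linarith [hFb u])
      constructor
      · apply Real.exp_le_exp.mpr
        nlinarith [norm_nonneg (y - F u)]
      · apply Real.exp_le_one_iff.mpr
        nlinarith [norm_nonneg (y - F u)]
    have hmeas : Measurable fun u => Real.exp (-((1 / 2) * ‖y - F u‖ ^ 2)) := by fun_prop
    have hint : Integrable (fun u => Real.exp (-((1 / 2) * ‖y - F u‖ ^ 2))) γ := by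
      refine Integrable.mono' (integrable_const 1) hmeas.aestronglyMeasurable ?_
      filter_upwards with u
      rw [Real.norm_eq_abs, abs_of_pos (Real.exp_pos _)]
      exact (hpt u).2
    refine ⟨hpt, hint, ?_, ?_⟩
    · calc m = ∫ _, m ∂γ := by simp
        _ ≤ _ := integral_mono (integrable_const m) hint (fun u => (hpt u).1)
    · calc (∫ v, Real.exp (-((1 / 2) * ‖y - F v‖ ^ 2)) ∂γ) ≤ ∫ _, (1 : ℝ) ∂γ :=
          integral_mono hint (integrable_const 1) (fun u => (hpt u).2)
        _ = 1 := by simp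
  obtain ⟨hpt₁, hint₁, hZ₁m, hZ₁1⟩ := base G hG hGb
  obtain ⟨hpt₂, hint₂, hZ₂m, hZ₂1⟩ := base GI hGI hGIb
  clear_value L m C
  -- potential Lipschitz bound
  have hΦ : ∀ u, |(1 / 2) * ‖y - G u‖ ^ 2 - (1 / 2) * ‖y - GI u‖ ^ 2| ≤ L * ε := by
    intro u
    have h1 : |‖y - G u‖ - ‖y - GI u‖| ≤ ε := by
      refine le_trans (abs_norm_sub_norm_le _ _) ?_
      have e : y - G u - (y - GI u) = -(G u - GI u) := by abel
      rw [e, norm_neg]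
      exact hdiff u
    have h2 : ‖y - G u‖ ≤ L := le_trans (norm_sub_le _ _) (by simp [hLdef]; linarith [hGb u])
    have h3 : ‖y - GI u‖ ≤ L := le_trans (norm_sub_le _ _) (by simp [hLdef]; linarith [hGIb u])
    have h4 := abs_le.mp h1
    rw [abs_le]
    constructor
    · nlinarith [norm_nonneg (y - G u), norm_nonneg (y - GI u)]
    · nlinarith [norm_nonneg (y - G u), norm_nonneg (y - GI u)]
  -- pointwise density Lipschitz bound
  have hab : ∀ u, |Real.exp (-((1 / 2) * ‖y - G u‖ ^ 2)) -
      Real.exp (-((1 / 2) * ‖y - GI u‖ ^ 2))| ≤ L * ε := by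
    intro u
    exact le_trans (expLip (by positivity) (by positivity)) (hΦ u)
  set Z₁ : ℝ := ∫ v, Real.exp (-((1 / 2) * ‖y - G v‖ ^ 2)) ∂γ with hZ₁def
  set Z₂ : ℝ := ∫ v, Real.exp (-((1 / 2) * ‖y - GI v‖ ^ 2)) ∂γ with hZ₂def
  -- normalization constants Lipschitz bound
  have hZ : |Z₁ - Z₂| ≤ L * ε := by
    have hsub : Z₁ - Z₂ = ∫ u, (Real.exp (-((1 / 2) * ‖y - G u‖ ^ 2)) -
        Real.exp (-((1 / 2) * ‖y - GI u‖ ^ 2))) ∂γ := by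
      rw [hZ₁def, hZ₂def]
      exact (integral_sub hint₁ hint₂).symm
    rw [hsub, ← Real.norm_eq_abs]
    have hcb := norm_integral_le_of_norm_le_const (μ := γ) (C := L * ε)
      (f := fun u => Real.exp (-((1 / 2) * ‖y - G u‖ ^ 2)) -
        Real.exp (-((1 / 2) * ‖y - GI u‖ ^ 2)))
      (by filter_upwards with u; rw [Real.norm_eq_abs]; exact hab u)
    simpa using hcb
  clear_value Z₁ Z₂
  have hZ₁0 : 0 < Z₁ := lt_of_lt_of_le hm0 hZ₁m
  have hZ₂0 : 0 < Z₂ := lt_of_lt_of_le hm0 hZ₂m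
  -- pointwise bound on the difference of square roots
  have hfin : ∀ u, |Real.sqrt (Real.exp (-((1 / 2) * ‖y - G u‖ ^ 2)) / Z₁) -
      Real.sqrt (Real.exp (-((1 / 2) * ‖y - GI u‖ ^ 2)) / Z₂)| ≤ C * ε := by
    intro u
    obtain ⟨ham, ha1⟩ := hpt₁ u
    obtain ⟨hbm, hb1⟩ := hpt₂ u
    have hab' := hab u
    set a : ℝ := Real.exp (-((1 / 2) * ‖y - G u‖ ^ 2)) with hadef
    set b : ℝ := Real.exp (-((1 / 2) * ‖y - GI u‖ ^ 2)) with hbdef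
    clear_value a b
    have ha0 : 0 < a := lt_of_lt_of_le hm0 ham
    have hb0 : 0 < b := lt_of_lt_of_le hm0 hbm
    have hq1 : m ≤ a / Z₁ := by
      rw [le_div_iff₀ hZ₁0]
      nlinarith
    have hq2 : m ≤ b / Z₂ := by
      rw [le_div_iff₀ hZ₂0]
      nlinarith
    have step1 := sqrtLip hm0 hq1 hq2
    have step2 : |a / Z₁ - b / Z₂| ≤ (|a - b| + |Z₁ - Z₂|) / m ^ 2 := by
      have e : a / Z₁ - b / Z₂ = ((a - b) * Z₂ + b * (Z₂ - Z₁)) / (Z₁ * Z₂) := by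
        field_simp; ring
      rw [e, abs_div]
      have hnum : |(a - b) * Z₂ + b * (Z₂ - Z₁)| ≤ |a - b| + |Z₁ - Z₂| := by
        refine le_trans (abs_add_le _ _) ?_
        rw [abs_mul, abs_mul]
        have e1 : |a - b| * |Z₂| ≤ |a - b| * 1 := by
          apply mul_le_mul_of_nonneg_left _ (abs_nonneg _)
          rw [abs_of_pos hZ₂0]; exact hZ₂1
        have e2 : |b| * |Z₂ - Z₁| ≤ 1 * |Z₂ - Z₁| := by
          apply mul_le_mul_of_nonneg_right _ (abs_nonneg _)
          rw [abs_of_pos hb0]; exact hb1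
        have habs : |Z₂ - Z₁| = |Z₁ - Z₂| := abs_sub_comm _ _
        linarith
      have hden : m ^ 2 ≤ |Z₁ * Z₂| := by
        rw [abs_of_pos (mul_pos hZ₁0 hZ₂0)]
        nlinarith
      exact div_le_div₀ (by positivity) hnum (pow_pos hm0 2) hden
    have step3 : |a - b| + |Z₁ - Z₂| ≤ 2 * (L * ε) := by linarith
    calc |Real.sqrt (a / Z₁) - Real.sqrt (b / Z₂)|
        ≤ |a / Z₁ - b / Z₂| / (2 * Real.sqrt m) := step1
      _ ≤ ((|a - b| + |Z₁ - Z₂|) / m ^ 2) / (2 * Real.sqrt m) :=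
          div_le_div₀ (div_nonneg (by positivity) (sq_nonneg m)) step2
            (mul_pos two_pos hsm) le_rfl
      _ ≤ ((2 * (L * ε)) / m ^ 2) / (2 * Real.sqrt m) :=
          div_le_div₀ (div_nonneg (by positivity) (sq_nonneg m))
            (div_le_div₀ (by positivity) step3 (pow_pos hm0 2) le_rfl)
            (mul_pos two_pos hsm) le_rfl
      _ = C * ε := by
          rw [hCdef]
          have h1 : Real.sqrt m ≠ 0 := hsm.ne'
          have h2 : m ≠ 0 := hm0.ne'
          field_simp
  -- conclude
  have hI0 : 0 ≤ ∫ u, (Real.sqrt (Real.exp (-((1 / 2) * ‖y - G u‖ ^ 2)) / Z₁) -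
      Real.sqrt (Real.exp (-((1 / 2) * ‖y - GI u‖ ^ 2)) / Z₂)) ^ 2 ∂γ :=
    integral_nonneg fun u => sq_nonneg _
  have hI : (∫ u, (Real.sqrt (Real.exp (-((1 / 2) * ‖y - G u‖ ^ 2)) / Z₁) -
      Real.sqrt (Real.exp (-((1 / 2) * ‖y - GI u‖ ^ 2)) / Z₂)) ^ 2 ∂γ) ≤ (C * ε) ^ 2 := by
    have hb := norm_integral_le_of_norm_le_const (μ := γ) (C := (C * ε) ^ 2)
      (f := fun u => (Real.sqrt (Real.exp (-((1 / 2) * ‖y - G u‖ ^ 2)) / Z₁) -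
        Real.sqrt (Real.exp (-((1 / 2) * ‖y - GI u‖ ^ 2)) / Z₂)) ^ 2)
      (by
        filter_upwards with u
        rw [Real.norm_eq_abs, abs_of_nonneg (sq_nonneg _), ← sq_abs]
        exact pow_le_pow_left₀ (abs_nonneg _) (hfin u) 2)
    simp only [measure_univ, ENNReal.toReal_one, probReal_univ, mul_one] at hb
    exact le_trans (le_abs_self _) (by rwa [← Real.norm_eq_abs])
  calc Real.sqrt ((1 / 2) * ∫ u, (Real.sqrt (Real.exp (-((1 / 2) * ‖y - G u‖ ^ 2)) / Z₁) -
        Real.sqrt (Real.exp (-((1 / 2) * ‖y - GI u‖ ^ 2)) / Z₂)) ^ 2 ∂γ)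
      ≤ Real.sqrt ((C * ε) ^ 2) := Real.sqrt_le_sqrt (by linarith)
    _ = C * ε := Real.sqrt_sq (mul_nonneg hC0.le hε)
end

section
/- With the multilevel sample size choice M_{ll'} = 2^{2(L−(l+l'))} and L'(l) = L − l, the total number of degrees of freedom ∑_{l=1}^L ∑_{l'=1}^{L−l} 2^{2(L−(l+l'))}(2^{3l} + 2^{3l'}) + ∑_{l=1}^L 2^{2(L−l)} 2^{3l} + ∑_{l'=1}^L 2^{3l'} + 2^{2L} is bounded by C·2^{3L} for a constant C independent of L. -/
lemma geomRange (x : ℝ) (h0 : 0 ≤ x) (h1 : x ≤ 1/2) (n : ℕ) :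
    ∑ i ∈ Finset.range n, x^i ≤ 2 := by
  calc ∑ i ∈ Finset.range n, x^i ≤ ∑ i ∈ Finset.range n, (1/2:ℝ)^i := by
        apply Finset.sum_le_sum; intro i _; exact pow_le_pow_left₀ h0 h1 i
    _ ≤ 2 := by simpa using sum_geometric_two_le n

lemma IccRange (f : ℕ → ℝ) (n : ℕ) :
    ∑ l ∈ Finset.Icc 1 n, f l = ∑ i ∈ Finset.range n, f (1+i) := by
  rw [← Finset.Ico_add_one_right_eq_Icc, Finset.sum_Ico_eq_sum_range]; simp

lemma geomIccSub (x : ℝ) (h0 : 0 ≤ x) (h1 : x ≤ 1/2) (n : ℕ) :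
    ∑ l ∈ Finset.Icc 1 n, x^(n-l) ≤ 2 := by
  rw [IccRange]
  calc ∑ i ∈ Finset.range n, x^(n-(1+i))
      = ∑ i ∈ Finset.range n, x^(n-1-i) := by
        apply Finset.sum_congr rfl
        intro i hi; congr 1; omega
    _ = ∑ i ∈ Finset.range n, x^i := Finset.sum_range_reflect (fun i => x^i) n
    _ ≤ 2 := geomRange x h0 h1 n

lemma geomIcc (x : ℝ) (h0 : 0 ≤ x) (h1 : x ≤ 1/2) (n : ℕ) :
    ∑ l ∈ Finset.Icc 1 n, x^l ≤ 1 := by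
  rw [IccRange]
  have : ∑ i ∈ Finset.range n, x^(1+i) = x * ∑ i ∈ Finset.range n, x^i := by
    rw [Finset.mul_sum]
    exact Finset.sum_congr rfl fun i _ => by rw [pow_add, pow_one]
  rw [this]
  calc x * ∑ i ∈ Finset.range n, x^i ≤ (1/2) * 2 :=
        mul_le_mul h1 (geomRange x h0 h1 n) (Finset.sum_nonneg fun i _ => pow_nonneg h0 i) (by norm_num)
    _ = 1 := by norm_num

lemma ptwise1 (L l l' : ℕ) (hl : l ≤ L) (hll' : l + l' ≤ L) :
    (2:ℝ)^(2*((L:ℤ) - ((l:ℤ)+(l':ℤ)))) * ((2:ℝ)^(3*l)+(2:ℝ)^(3*l'))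
    = (2:ℝ)^(3*L) * ((1/2:ℝ)^(L-l) * (1/4:ℝ)^(l') + (1/8:ℝ)^l * (1/2:ℝ)^(L-l-l')) := by
  obtain ⟨m, rfl⟩ : ∃ m, L = l + l' + m := ⟨L - (l+l'), by omega⟩
  have h1 : 2*(((l+l'+m:ℕ):ℤ) - ((l:ℤ)+(l':ℤ))) = ((2*m:ℕ):ℤ) := by push_cast; ring
  rw [h1, zpow_natCast]
  have e1 : l + l' + m - l = l' + m := by omega
  have e2 : l + l' + m - l - l' = m := by omega
  rw [e2, e1]
  rw [div_pow, div_pow, div_pow, one_pow, one_pow, one_pow]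
  rw [show (4:ℝ) = 2^2 by norm_num, show (8:ℝ) = 2^3 by norm_num, ← pow_mul, ← pow_mul]
  simp only [div_pow, one_pow]
  field_simp
  ring

lemma ptwise2 (L l : ℕ) (hl : l ≤ L) :
    (2:ℝ)^(2*((L:ℤ) - (l:ℤ))) * (2:ℝ)^(3*l) = (2:ℝ)^(3*L) * (1/2:ℝ)^(L-l) := by
  obtain ⟨m, rfl⟩ : ∃ m, L = l + m := ⟨L - l, by omega⟩
  have h1 : 2*(((l+m:ℕ):ℤ) - (l:ℤ)) = ((2*m:ℕ):ℤ) := by push_cast; ring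
  rw [h1, zpow_natCast, show l + m - l = m by omega]
  rw [div_pow, one_pow]
  field_simp
  ring

lemma ptwise3 (L l : ℕ) (hl : l ≤ L) :
    (2:ℝ)^(3*l) = (2:ℝ)^(3*L) * (1/8:ℝ)^(L-l) := by
  obtain ⟨m, rfl⟩ : ∃ m, L = l + m := ⟨L - l, by omega⟩
  rw [show l + m - l = m by omega]
  rw [div_pow, one_pow, show (8:ℝ) = 2^3 by norm_num, ← pow_mul]
  field_simp
  ring


/-- With the multilevel sample sizes `M_{ll'} = 2^{2(L-(l+l'))}` and `L'(l) = L - l`, the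
total number of degrees of freedom of the MLMCMC estimator is bounded by `C · 2^{3L}` with
`C` independent of `L`. -/
theorem mlmcmc_cost_bound :
    ∃ C : ℝ, 0 < C ∧ ∀ L : ℕ, 1 ≤ L →
      (∑ l ∈ Finset.Icc 1 L, ∑ l' ∈ Finset.Icc 1 (L - l),
          (2 : ℝ) ^ (2 * ((L : ℤ) - ((l : ℤ) + (l' : ℤ)))) *
            ((2 : ℝ) ^ (3 * l) + (2 : ℝ) ^ (3 * l')))
        + (∑ l ∈ Finset.Icc 1 L, (2 : ℝ) ^ (2 * ((L : ℤ) - (l : ℤ))) * (2 : ℝ) ^ (3 * l))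
        + (∑ l' ∈ Finset.Icc 1 L, (2 : ℝ) ^ (3 * l'))
        + (2 : ℝ) ^ (2 * L)
      ≤ C * (2 : ℝ) ^ (3 * L) := by
  refine ⟨9, by norm_num, fun L hL => ?_⟩
  set P : ℝ := (2:ℝ)^(3*L) with hPdef
  have hP : (0:ℝ) ≤ P := by positivity
  have hS1 : (∑ l ∈ Finset.Icc 1 L, ∑ l' ∈ Finset.Icc 1 (L - l),
      (2 : ℝ) ^ (2 * ((L : ℤ) - ((l : ℤ) + (l' : ℤ)))) *
        ((2 : ℝ) ^ (3 * l) + (2 : ℝ) ^ (3 * l'))) ≤ 4 * P := by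
    calc (∑ l ∈ Finset.Icc 1 L, ∑ l' ∈ Finset.Icc 1 (L - l),
        (2 : ℝ) ^ (2 * ((L : ℤ) - ((l : ℤ) + (l' : ℤ)))) *
          ((2 : ℝ) ^ (3 * l) + (2 : ℝ) ^ (3 * l')))
        ≤ ∑ l ∈ Finset.Icc 1 L, P * ((1/2:ℝ)^(L-l) * 1 + (1/8:ℝ)^l * 2) := by
          apply Finset.sum_le_sum
          intro l hl
          have hlL : l ≤ L := (Finset.mem_Icc.mp hl).2
          have hrw : ∑ l' ∈ Finset.Icc 1 (L - l),
              (2 : ℝ) ^ (2 * ((L : ℤ) - ((l : ℤ) + (l' : ℤ)))) *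
                ((2 : ℝ) ^ (3 * l) + (2 : ℝ) ^ (3 * l'))
              = ∑ l' ∈ Finset.Icc 1 (L - l),
                P * ((1/2:ℝ)^(L-l) * (1/4:ℝ)^(l') + (1/8:ℝ)^l * (1/2:ℝ)^(L-l-l')) := by
            refine Finset.sum_congr rfl fun l' hl' => ?_
            exact ptwise1 L l l' hlL (by have := (Finset.mem_Icc.mp hl').2; omega)
          rw [hrw, ← Finset.mul_sum, Finset.sum_add_distrib, ← Finset.mul_sum, ← Finset.mul_sum]
          apply mul_le_mul_of_nonneg_left _ hP
          apply add_le_add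
          · exact mul_le_mul_of_nonneg_left (geomIcc (1/4) (by norm_num) (by norm_num) (L-l))
              (by positivity)
          · exact mul_le_mul_of_nonneg_left (geomIccSub (1/2) (by norm_num) (by norm_num) (L-l))
              (by positivity)
      _ = P * ((∑ l ∈ Finset.Icc 1 L, (1/2:ℝ)^(L-l)) * 1
            + (∑ l ∈ Finset.Icc 1 L, (1/8:ℝ)^l) * 2) := by
          rw [← Finset.mul_sum, Finset.sum_add_distrib, ← Finset.sum_mul, ← Finset.sum_mul]
      _ ≤ P * (2 * 1 + 1 * 2) := by
          apply mul_le_mul_of_nonneg_left _ hP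
          apply add_le_add
          · exact mul_le_mul_of_nonneg_right
              (geomIccSub (1/2) (by norm_num) (by norm_num) L) (by norm_num)
          · exact mul_le_mul_of_nonneg_right
              (geomIcc (1/8) (by norm_num) (by norm_num) L) (by norm_num)
      _ = 4 * P := by ring
  have hS2 : (∑ l ∈ Finset.Icc 1 L, (2 : ℝ) ^ (2 * ((L : ℤ) - (l : ℤ))) * (2 : ℝ) ^ (3 * l))
      ≤ 2 * P := by
    have hrw : ∀ l ∈ Finset.Icc 1 L,
        (2 : ℝ) ^ (2 * ((L : ℤ) - (l : ℤ))) * (2 : ℝ) ^ (3 * l) = P * (1/2:ℝ)^(L-l) :=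
      fun l hl => ptwise2 L l (Finset.mem_Icc.mp hl).2
    rw [Finset.sum_congr rfl hrw, ← Finset.mul_sum]
    calc P * ∑ l ∈ Finset.Icc 1 L, (1/2:ℝ)^(L-l) ≤ P * 2 :=
          mul_le_mul_of_nonneg_left (geomIccSub (1/2) (by norm_num) (by norm_num) L) hP
      _ = 2 * P := by ring
  have hS3 : (∑ l' ∈ Finset.Icc 1 L, (2 : ℝ) ^ (3 * l')) ≤ 2 * P := by
    have hrw : ∀ l ∈ Finset.Icc 1 L, (2 : ℝ) ^ (3 * l) = P * (1/8:ℝ)^(L-l) :=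
      fun l hl => ptwise3 L l (Finset.mem_Icc.mp hl).2
    rw [Finset.sum_congr rfl hrw, ← Finset.mul_sum]
    calc P * ∑ l ∈ Finset.Icc 1 L, (1/8:ℝ)^(L-l) ≤ P * 2 :=
          mul_le_mul_of_nonneg_left (geomIccSub (1/8) (by norm_num) (by norm_num) L) hP
      _ = 2 * P := by ring
  have hS4 : (2:ℝ)^(2*L) ≤ P := pow_le_pow_right₀ one_le_two (by omega)
  linarith
end
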